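/- Let b := (1 + i − j + k)/2 and c := (1 + i − j − k)/2 in the real quaternions ℍ. Then for every quaternion a ∈ ℍ one has (b·a·c)·i = b·(−(a·j))·c. In other words, the map φ(a) := b·a·c satisfies A₃ ∘ φ = φ ∘ A₋, where A₃(a) = a·i and A₋(a) = −a·j. -/

import Mathlib

/-- The imaginary unit `i` of the quaternions. -/
noncomputable def qi : Quaternion ℝ := ⟨0, 1, 0, 0⟩

/-- The imaginary unit `j` of the quaternions. -/
noncomputable def qj : Quaternion ℝ := ⟨0, 0, 1, 0⟩

/-- The imaginary unit `k` of the quaternions. -/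
noncomputable def qk : Quaternion ℝ := ⟨0, 0, 0, 1⟩

/-- With `b = (1 + i − j + k)/2` and `c = (1 + i − j − k)/2`, the map
`φ(a) = b·a·c` satisfies `A₃ ∘ φ = φ ∘ A₋`, where `A₃(a) = a·i` and
`A₋(a) = −a·j`. -/
theorem conj_A_minus_to_A_three :
    ∀ a : Quaternion ℝ,
      (((1 + qi - qj + qk) / 2) * a * ((1 + qi - qj - qk) / 2)) * qi =
        ((1 + qi - qj + qk) / 2) * (-(a * qj)) * ((1 + qi - qj - qk) / 2) := by
  intro a
  have hre : (2 : Quaternion ℝ).re = 2 := rfl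
  have hI : (2 : Quaternion ℝ).imI = 0 := rfl
  have hJ : (2 : Quaternion ℝ).imJ = 0 := rfl
  have hK : (2 : Quaternion ℝ).imK = 0 := rfl
  have h2' : (2 : Quaternion ℝ) ≠ 0 := by
    rw [Ne, Quaternion.ext_iff, hre, hI, hJ, hK]
    intro h
    exact two_ne_zero (α := ℝ) (h.1.trans rfl)
  have hb : (1 + qi - qj + qk) / 2 = (⟨1/2, 1/2, -(1/2), 1/2⟩ : Quaternion ℝ) := by
    refine (div_eq_iff h2').mpr ?_
    ext
    · erw [Quaternion.re_mul]; simp [hre, hI, hJ, hK, Quaternion.re_one, Quaternion.imI_one, Quaternion.imJ_one, Quaternion.imK_one]; norm_num [qi, qj, qk]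
    · erw [Quaternion.imI_mul]; simp [hre, hI, hJ, hK, Quaternion.re_one, Quaternion.imI_one, Quaternion.imJ_one, Quaternion.imK_one]; norm_num [qi, qj, qk]
    · erw [Quaternion.imJ_mul]; simp [hre, hI, hJ, hK, Quaternion.re_one, Quaternion.imI_one, Quaternion.imJ_one, Quaternion.imK_one]; norm_num [qi, qj, qk]
    · erw [Quaternion.imK_mul]; simp [hre, hI, hJ, hK, Quaternion.re_one, Quaternion.imI_one, Quaternion.imJ_one, Quaternion.imK_one]; norm_num [qi, qj, qk]
  have hc : (1 + qi - qj - qk) / 2 = (⟨1/2, 1/2, -(1/2), -(1/2)⟩ : Quaternion ℝ) := by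
    refine (div_eq_iff h2').mpr ?_
    ext
    · erw [Quaternion.re_mul]; simp [hre, hI, hJ, hK, Quaternion.re_one, Quaternion.imI_one, Quaternion.imJ_one, Quaternion.imK_one]; norm_num [qi, qj, qk]
    · erw [Quaternion.imI_mul]; simp [hre, hI, hJ, hK, Quaternion.re_one, Quaternion.imI_one, Quaternion.imJ_one, Quaternion.imK_one]; norm_num [qi, qj, qk]
    · erw [Quaternion.imJ_mul]; simp [hre, hI, hJ, hK, Quaternion.re_one, Quaternion.imI_one, Quaternion.imJ_one, Quaternion.imK_one]; norm_num [qi, qj, qk]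
    · erw [Quaternion.imK_mul]; simp [hre, hI, hJ, hK, Quaternion.re_one, Quaternion.imI_one, Quaternion.imJ_one, Quaternion.imK_one]; norm_num [qi, qj, qk]
  ext <;> simp only [Quaternion.re_mul, Quaternion.imI_mul, Quaternion.imJ_mul,
    Quaternion.imK_mul, Quaternion.re_neg, Quaternion.imI_neg, Quaternion.imJ_neg, Quaternion.imK_neg] <;>
    simp only [hb, hc] <;> simp [qi, qj, qk] <;> ring
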